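/- Nonlinear continuity/bootstrap lemma: let y : [0,T] → ℝ≥0 be continuous with y(0) ≤ A, and suppose y(τ) ≤ A + B ∫₀^τ e^{-λσ} y(σ)² dσ for all τ, where A, B ≥ 0, λ > 0 and 4AB < λ. Then y(τ) ≤ 2A for all τ ∈ [0,T]. -/

import Mathlib

open Set

lemma stmt_12_aux (T A B l : ℝ) (hT : 0 ≤ T) (hA : 0 < A) (hB : 0 ≤ B) (hl : 0 < l)
    (hsmall : 4 * A * B < l)
    (y : ℝ → ℝ) (hcont : ContinuousOn y (Icc 0 T))
    (hnn : ∀ τ ∈ Icc (0:ℝ) T, 0 ≤ y τ)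
    (h0 : y 0 ≤ A)
    (hineq : ∀ τ ∈ Icc (0:ℝ) T,
      y τ ≤ A + B * ∫ σ in (0:ℝ)..τ, Real.exp (-l * σ) * y σ ^ 2) :
    ∀ τ ∈ Icc (0:ℝ) T, y τ ≤ 2 * A := by
  by_contra h
  push_neg at h
  obtain ⟨τ₁, hτ₁, hyτ₁⟩ := h
  set E : Set ℝ := Icc 0 T ∩ y ⁻¹' (Ici (2 * A)) with hE
  have hEne : E.Nonempty := ⟨τ₁, hτ₁, hyτ₁.le⟩
  have hEclosed : IsClosed E :=
    ContinuousOn.preimage_isClosed_of_isClosed hcont isClosed_Icc isClosed_Ici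
  have hEbdd : BddBelow E := ⟨0, fun x hx => hx.1.1⟩
  set t₀ := sInf E with ht₀
  have ht₀E : t₀ ∈ E := hEclosed.csInf_mem hEne hEbdd
  have ht₀Icc : t₀ ∈ Icc (0:ℝ) T := ht₀E.1
  have ht₀y : 2 * A ≤ y t₀ := ht₀E.2
  have ht₀pos : 0 < t₀ := by
    rcases lt_or_eq_of_le ht₀Icc.1 with h | h
    · exact h
    · exfalso; rw [← h] at ht₀y; linarith
  have hC : A + B * (4 * A ^ 2 / l) < 2 * A := by
    have h1 : B * (4 * A ^ 2 / l) < A := by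
      rw [← mul_div_assoc, div_lt_iff₀ hl]
      nlinarith
    linarith
  -- key: for t strictly before t₀, y t ≤ C
  have key : ∀ t ∈ Ico (0:ℝ) t₀, y t ≤ A + B * (4 * A ^ 2 / l) := by
    intro t ht
    have htT : t ∈ Icc (0:ℝ) T := ⟨ht.1, le_trans ht.2.le ht₀Icc.2⟩
    have hbound : ∀ σ ∈ Icc (0:ℝ) t, y σ ≤ 2 * A := by
      intro σ hσ
      have hσT : σ ∈ Icc (0:ℝ) T := ⟨hσ.1, le_trans hσ.2 htT.2⟩
      by_contra hcon
      push_neg at hcon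
      have : σ ∈ E := ⟨hσT, hcon.le⟩
      have := csInf_le hEbdd this
      have : t₀ ≤ t := le_trans this hσ.2
      exact absurd ht.2 (not_lt.2 this)
    have hint1 : IntervalIntegrable (fun σ => Real.exp (-l * σ) * y σ ^ 2)
        MeasureTheory.volume 0 t := by
      apply ContinuousOn.intervalIntegrable
      apply ContinuousOn.mul
      · exact (Real.continuous_exp.comp (continuous_const.mul continuous_id)).continuousOn
      · have : ContinuousOn y (uIcc 0 t) := by
          apply hcont.mono
          rw [uIcc_of_le ht.1]
          exact Icc_subset_Icc le_rfl htT.2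
        exact this.pow 2
    have hint2 : IntervalIntegrable (fun σ => Real.exp (-l * σ) * (2 * A) ^ 2)
        MeasureTheory.volume 0 t :=
      (Continuous.intervalIntegrable (by continuity) 0 t)
    have hmono : (∫ σ in (0:ℝ)..t, Real.exp (-l * σ) * y σ ^ 2)
        ≤ ∫ σ in (0:ℝ)..t, Real.exp (-l * σ) * (2 * A) ^ 2 := by
      apply intervalIntegral.integral_mono_on ht.1 hint1 hint2
      intro σ hσ
      have hσT : σ ∈ Icc (0:ℝ) T := ⟨hσ.1, le_trans hσ.2 htT.2⟩
      have h1 := hbound σ hσ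
      have h2 := hnn σ hσT
      have h3 : (0:ℝ) < Real.exp (-l * σ) := Real.exp_pos _
      have h4 : y σ ^ 2 ≤ (2 * A) ^ 2 := by nlinarith
      exact mul_le_mul_of_nonneg_left h4 h3.le
    have hcalc : (∫ σ in (0:ℝ)..t, Real.exp (-l * σ) * (2 * A) ^ 2)
        ≤ 4 * A ^ 2 / l := by
      have : (∫ σ in (0:ℝ)..t, Real.exp (-l * σ) * (2 * A) ^ 2)
          = (2 * A) ^ 2 * ∫ σ in (0:ℝ)..t, Real.exp (-l * σ) := by
        rw [← intervalIntegral.integral_const_mul]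
        congr 1; ext σ; ring
      rw [this]
      have hval : (∫ σ in (0:ℝ)..t, Real.exp (-l * σ))
          = (1 - Real.exp (-l * t)) / l := by
        have hd : ∀ x ∈ uIcc (0:ℝ) t,
            HasDerivAt (fun σ => -(Real.exp (-l * σ)) / l) (Real.exp (-l * x)) x := by
          intro x _
          have h1 : HasDerivAt (fun σ : ℝ => -l * σ) (-l) x := by
            simpa using (hasDerivAt_id x).const_mul (-l)
          have h2 : HasDerivAt (fun σ => Real.exp (-l * σ)) (Real.exp (-l * x) * (-l)) x :=
            (Real.hasDerivAt_exp (-l * x)).comp x h1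
          have h3 := (h2.neg).div_const l
          exact h3.congr_deriv (by rw [mul_neg, neg_neg, mul_div_assoc, div_self hl.ne', mul_one])
        have hcont' : ContinuousOn (fun σ => Real.exp (-l * σ)) (uIcc 0 t) :=
          (Real.continuous_exp.comp (continuous_const.mul continuous_id)).continuousOn
        have := intervalIntegral.integral_eq_sub_of_hasDerivAt hd
          (hcont'.intervalIntegrable)
        rw [this]
        simp [Real.exp_zero]
        ring
      rw [hval]
      have h5 : (0:ℝ) < Real.exp (-l * t) := Real.exp_pos _
      have h6 : (1 - Real.exp (-l * t)) / l ≤ 1 / l := by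
        gcongr
        linarith
      calc (2 * A) ^ 2 * ((1 - Real.exp (-l * t)) / l)
          ≤ (2 * A) ^ 2 * (1 / l) := by
            exact mul_le_mul_of_nonneg_left h6 (sq_nonneg _)
        _ = 4 * A ^ 2 / l := by ring
    have := hineq t htT
    calc y t ≤ A + B * ∫ σ in (0:ℝ)..t, Real.exp (-l * σ) * y σ ^ 2 := this
      _ ≤ A + B * (4 * A ^ 2 / l) := by
          have := le_trans hmono hcalc
          nlinarith
  -- left continuity at t₀
  have hmem : t₀ ∈ closure (Ico (0:ℝ) t₀) := by
    rw [closure_Ico (ne_of_lt ht₀pos)]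
    exact ⟨ht₀Icc.1, le_rfl⟩
  have hne : (nhdsWithin t₀ (Ico (0:ℝ) t₀)).NeBot :=
    mem_closure_iff_nhdsWithin_neBot.mp hmem
  have htend : Filter.Tendsto y (nhdsWithin t₀ (Ico (0:ℝ) t₀)) (nhds (y t₀)) := by
    apply (hcont t₀ ht₀Icc).mono
    intro x hx
    exact ⟨hx.1, le_trans hx.2.le ht₀Icc.2⟩
  have : y t₀ ≤ A + B * (4 * A ^ 2 / l) :=
    le_of_tendsto htend (Filter.eventually_of_mem self_mem_nhdsWithin key)
  linarith

/-- Nonlinear continuity/bootstrap lemma with quadratic nonlinearity. -/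
theorem stmt_12 (T A B l : ℝ) (hT : 0 ≤ T) (hA : 0 ≤ A) (hB : 0 ≤ B) (hl : 0 < l)
    (hsmall : 4 * A * B < l)
    (y : ℝ → ℝ) (hcont : ContinuousOn y (Icc 0 T))
    (hnn : ∀ τ ∈ Icc (0:ℝ) T, 0 ≤ y τ)
    (h0 : y 0 ≤ A)
    (hineq : ∀ τ ∈ Icc (0:ℝ) T,
      y τ ≤ A + B * ∫ σ in (0:ℝ)..τ, Real.exp (-l * σ) * y σ ^ 2) :
    ∀ τ ∈ Icc (0:ℝ) T, y τ ≤ 2 * A := by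
  intro τ hτ
  by_contra hcon
  push_neg at hcon
  set ε := min ((y τ - 2 * A) / 4) ((l - 4 * A * B) / (8 * B + 8)) with hεdef
  have hε : 0 < ε := by
    apply lt_min
    · linarith
    · apply div_pos (by linarith) (by linarith)
  have hsmall' : 4 * (A + ε) * B < l := by
    have h1 : ε ≤ (l - 4 * A * B) / (8 * B + 8) := min_le_right _ _
    have h2 : ε * (8 * B + 8) ≤ l - 4 * A * B :=
      (le_div_iff₀ (by linarith)).mp h1
    nlinarith
  have := stmt_12_aux T (A + ε) B l hT (by linarith) hB hl hsmall' y hcont hnn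
    (by linarith)
    (fun σ hσ => le_trans (hineq σ hσ) (by linarith))
    τ hτ
  have h3 : ε ≤ (y τ - 2 * A) / 4 := min_le_left _ _
  linarith
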